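/- Let X be a real Banach space, let r > 0 and γ ≥ 0, and let E : X → ℝ ∪ {+∞} be a function which is finite and three times continuously Fréchet differentiable on the open ball B_r of radius r about 0, with E(0) = 0 and E(v) ≥ (γ/2)‖v‖² for all v ∈ X. Then for every ε > 0 there exists R > 0 such that for all u ∈ X with ‖u‖ ≤ R and all v ∈ X one has E(u+v) − E(u) − δE(u)[v] ≥ ((γ−ε)/2)‖v‖² (the inequality being interpreted in the extended reals, and holding trivially where E(u+v) = +∞). -/

import Mathlib

set_option maxHeartbeats 1000000


lemma key_low (φ φ' φ'' : ℝ → ℝ) (c : ℝ)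
    (h1 : ∀ t ∈ Set.Icc (0:ℝ) 1, HasDerivAt φ (φ' t) t)
    (h2 : ∀ t ∈ Set.Icc (0:ℝ) 1, HasDerivAt φ' (φ'' t) t)
    (hc : ∀ t ∈ Set.Icc (0:ℝ) 1, c ≤ φ'' t) :
    φ 0 + φ' 0 + c / 2 ≤ φ 1 := by
  have hIoo : interior (Set.Icc (0:ℝ) 1) = Set.Ioo 0 1 := interior_Icc
  have hD1 : ∀ t ∈ Set.Icc (0:ℝ) 1,
      HasDerivAt (fun x => φ' x - c * x) (φ'' t - c) t := by
    intro t ht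
    exact ((h2 t ht).sub ((hasDerivAt_id t).const_mul c)).congr_deriv (by ring)
  have mono1 : MonotoneOn (fun t => φ' t - c * t) (Set.Icc 0 1) := by
    apply monotoneOn_of_deriv_nonneg (convex_Icc 0 1)
    · exact fun t ht => (hD1 t ht).continuousAt.continuousWithinAt
    · intro t ht
      rw [hIoo] at ht
      exact (hD1 t (Set.Ioo_subset_Icc_self ht)).differentiableAt.differentiableWithinAt
    · intro t ht
      rw [hIoo] at ht
      rw [(hD1 t (Set.Ioo_subset_Icc_self ht)).deriv]
      have := hc t (Set.Ioo_subset_Icc_self ht)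
      linarith
  have hstep : ∀ t ∈ Set.Icc (0:ℝ) 1, φ' 0 + c * t ≤ φ' t := by
    intro t ht
    have := mono1 (Set.left_mem_Icc.2 one_pos.le) ht ht.1
    simp only [mul_zero, sub_zero] at this
    linarith
  have hD2 : ∀ t ∈ Set.Icc (0:ℝ) 1,
      HasDerivAt (fun x => φ x - φ' 0 * x - c * x ^ 2 / 2) (φ' t - φ' 0 - c * t) t := by
    intro t ht
    have h := ((h1 t ht).sub ((hasDerivAt_id t).const_mul (φ' 0))).sub
      (((hasDerivAt_pow 2 t).const_mul c).div_const 2)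
    refine h.congr_deriv ?_
    push_cast
    ring
  have mono2 : MonotoneOn (fun t => φ t - φ' 0 * t - c * t ^ 2 / 2) (Set.Icc 0 1) := by
    apply monotoneOn_of_deriv_nonneg (convex_Icc 0 1)
    · exact fun t ht => (hD2 t ht).continuousAt.continuousWithinAt
    · intro t ht
      rw [hIoo] at ht
      exact (hD2 t (Set.Ioo_subset_Icc_self ht)).differentiableAt.differentiableWithinAt
    · intro t ht
      rw [hIoo] at ht
      rw [(hD2 t (Set.Ioo_subset_Icc_self ht)).deriv]
      have := hstep t (Set.Ioo_subset_Icc_self ht)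
      linarith
  have := mono2 (Set.left_mem_Icc.2 one_pos.le) (Set.right_mem_Icc.2 one_pos.le) one_pos.le
  norm_num at this
  linarith

lemma key_high (φ φ' φ'' : ℝ → ℝ) (c : ℝ)
    (h1 : ∀ t ∈ Set.Icc (0:ℝ) 1, HasDerivAt φ (φ' t) t)
    (h2 : ∀ t ∈ Set.Icc (0:ℝ) 1, HasDerivAt φ' (φ'' t) t)
    (hc : ∀ t ∈ Set.Icc (0:ℝ) 1, φ'' t ≤ c) :
    φ 1 ≤ φ 0 + φ' 0 + c / 2 := by
  have := key_low (fun t => -φ t) (fun t => -φ' t) (fun t => -φ'' t) (-c)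
    (fun t ht => (h1 t ht).neg) (fun t ht => (h2 t ht).neg)
    (fun t ht => neg_le_neg (hc t ht))
  linarith

section seg
variable {X : Type*} [NormedAddCommGroup X] [NormedSpace ℝ X]
  (e : X → ℝ) (f : X → X →L[ℝ] ℝ) (B : X → X →L[ℝ] X →L[ℝ] ℝ) (u v : X)

lemma line_hasDerivAt (t : ℝ) : HasDerivAt (fun s : ℝ => u + s • v) v t := by
  simpa using ((hasDerivAt_id t).smul_const v).const_add u

lemma phi1 (hf : ∀ t ∈ Set.Icc (0:ℝ) 1, HasFDerivAt e (f (u + t • v)) (u + t • v)) :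
    ∀ t ∈ Set.Icc (0:ℝ) 1, HasDerivAt (fun s => e (u + s • v)) (f (u + t • v) v) t :=
  fun t ht => (hf t ht).comp_hasDerivAt t (line_hasDerivAt u v t)

lemma phi2 (hB : ∀ t ∈ Set.Icc (0:ℝ) 1, HasFDerivAt f (B (u + t • v)) (u + t • v)) :
    ∀ t ∈ Set.Icc (0:ℝ) 1,
      HasDerivAt (fun s => f (u + s • v) v) (B (u + t • v) v v) t := by
  intro t ht
  have hinner : HasDerivAt (fun s => f (u + s • v)) (B (u + t • v) v) t :=
    (hB t ht).comp_hasDerivAt t (line_hasDerivAt u v t)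
  have := (ContinuousLinearMap.apply ℝ ℝ v).hasFDerivAt.comp_hasDerivAt t hinner
  simpa [Function.comp_def] using this

lemma seg_low (c : ℝ)
    (hf : ∀ t ∈ Set.Icc (0:ℝ) 1, HasFDerivAt e (f (u + t • v)) (u + t • v))
    (hB : ∀ t ∈ Set.Icc (0:ℝ) 1, HasFDerivAt f (B (u + t • v)) (u + t • v))
    (hc : ∀ t ∈ Set.Icc (0:ℝ) 1, c ≤ B (u + t • v) v v) :
    e u + f u v + c / 2 ≤ e (u + v) := by
  have := key_low (fun s => e (u + s • v)) (fun s => f (u + s • v) v)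
    (fun s => B (u + s • v) v v) c (phi1 e f u v hf) (phi2 f B u v hB) hc
  simpa using this

lemma seg_high (c : ℝ)
    (hf : ∀ t ∈ Set.Icc (0:ℝ) 1, HasFDerivAt e (f (u + t • v)) (u + t • v))
    (hB : ∀ t ∈ Set.Icc (0:ℝ) 1, HasFDerivAt f (B (u + t • v)) (u + t • v))
    (hc : ∀ t ∈ Set.Icc (0:ℝ) 1, B (u + t • v) v v ≤ c) :
    e (u + v) ≤ e u + f u v + c / 2 := by
  have := key_high (fun s => e (u + s • v)) (fun s => f (u + s • v) v)
    (fun s => B (u + s • v) v v) c (phi1 e f u v hf) (phi2 f B u v hB) hc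
  simpa using this

end seg

/-- uniform quadratic growth near the minimum for an extended-real-valued
energy on a Banach space.  `E : X → EReal` takes values in `ℝ ∪ {+∞}` (the value `-∞`
is excluded by the growth hypothesis); `e` is the finite, `C³` representative of `E`
on the open ball of radius `r` about `0`, so that the Fréchet derivative of `E` at an
interior point `u` is `fderiv ℝ e u`. -/
theorem stmt_0 (X : Type*) [NormedAddCommGroup X] [NormedSpace ℝ X] [CompleteSpace X]
    (r γ : ℝ) (hr : 0 < r) (hγ : 0 ≤ γ)
    (E : X → EReal) (e : X → ℝ)
    (hEe : ∀ x ∈ Metric.ball (0 : X) r, E x = (e x : EReal))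
    (he : ContDiffOn ℝ 3 e (Metric.ball (0 : X) r))
    (hE0 : E 0 = 0)
    (hgrowth : ∀ v : X, ((γ / 2 * ‖v‖ ^ 2 : ℝ) : EReal) ≤ E v) :
    ∀ ε : ℝ, 0 < ε → ∃ R : ℝ, 0 < R ∧
      ∀ u : X, ‖u‖ ≤ R → ∀ v : X,
        (((γ - ε) / 2 * ‖v‖ ^ 2 : ℝ) : EReal) ≤
          E (u + v) - E u - ((fderiv ℝ e u v : ℝ) : EReal) := by
  set s := Metric.ball (0 : X) r with hs
  have hsOpen : IsOpen s := Metric.isOpen_ball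
  have hmem : ∀ x : X, ‖x‖ < r → x ∈ s := by
    intro x hx; simpa [hs, Metric.mem_ball, dist_zero_right] using hx
  have h0s : (0 : X) ∈ s := hmem 0 (by simpa using hr)
  set f : X → X →L[ℝ] ℝ := fun x => fderiv ℝ e x with hf_def
  set B : X → X →L[ℝ] X →L[ℝ] ℝ := fun x => fderiv ℝ f x with hB_def
  -- derivatives
  have hf : ∀ x ∈ s, HasFDerivAt e (f x) x := by
    intro x hx
    exact ((he.differentiableOn (by norm_num)).differentiableAt
      (hsOpen.mem_nhds hx)).hasFDerivAt
  have hf2 : ContDiffOn ℝ 2 f s := he.fderiv_of_isOpen hsOpen (by norm_num)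
  have hB : ∀ x ∈ s, HasFDerivAt f (B x) x := by
    intro x hx
    exact ((hf2.differentiableOn (by norm_num)).differentiableAt
      (hsOpen.mem_nhds hx)).hasFDerivAt
  have hBcont : ContinuousOn B s := hf2.continuousOn_fderiv_of_isOpen hsOpen (by norm_num)
  -- real growth on ball
  have hge : ∀ x ∈ s, γ / 2 * ‖x‖ ^ 2 ≤ e x := by
    intro x hx
    have := hgrowth x
    rw [hEe x hx] at this
    exact_mod_cast this
  have he0 : e 0 = 0 := by
    have := hEe 0 h0s
    rw [hE0] at this
    exact_mod_cast this.symm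
  have hf0 : f 0 = 0 := by
    have hmin : IsLocalMin e 0 := by
      have : ∀ᶠ x in nhds (0 : X), e 0 ≤ e x := by
        filter_upwards [hsOpen.mem_nhds h0s] with x hx
        have := hge x hx
        nlinarith [sq_nonneg ‖x‖]
      exact this
    exact hmin.hasFDerivAt_eq_zero (hf 0 h0s)
  -- second derivative bound at 0
  have hB0 : ∀ v : X, γ * ‖v‖ ^ 2 ≤ B 0 v v := by
    intro v
    rcases eq_or_ne v 0 with rfl | hv
    · simp
    have hvpos : (0:ℝ) < ‖v‖ := norm_pos_iff.2 hv
    have key : ∀ η : ℝ, 0 < η → γ * ‖v‖ ^ 2 ≤ B 0 v v + η * ‖v‖ ^ 2 := by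
      intro η hη
      have hnB : ContinuousOn (fun x => ‖B x - B 0‖) s := by
        have h2 : ContinuousOn (fun x => B x - B 0) s := (hf2.continuousOn_fderiv_of_isOpen hsOpen (by norm_num)).sub (continuousOn_const (c := fderiv ℝ f 0))
        exact ContinuousOn.norm (E := X →L[ℝ] X →L[ℝ] ℝ) h2
      obtain ⟨δ₀, hδ₀pos, hδ₀'⟩ := Metric.continuousAt_iff.1
        (hnB.continuousAt (hsOpen.mem_nhds h0s)) η hη
      have hδ₀ : ∀ x : X, ‖x‖ < δ₀ → ‖B x - B 0‖ < η := by
        intro x hx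
        have h3 := hδ₀' (show dist x (0:X) < δ₀ by rwa [dist_zero_right])
        rw [Real.dist_eq] at h3
        rw [show ‖B 0 - B 0‖ = 0 from le_antisymm (ContinuousLinearMap.opNorm_le_bound _ le_rfl (fun y => by simp)) (ContinuousLinearMap.opNorm_nonneg _), sub_zero] at h3
        exact lt_of_le_of_lt (le_abs_self _) h3
      set δ := min δ₀ r with hδdef
      have hδpos : 0 < δ := lt_min hδ₀pos hr
      have hδr : δ ≤ r := min_le_right _ _
      set sfac : ℝ := δ / (2 * ‖v‖) with hsfac
      have hspos : 0 < sfac := div_pos hδpos (by positivity)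
      set w : X := sfac • v with hw
      have hwnorm : ‖w‖ = δ / 2 := by
        rw [hw, norm_smul, Real.norm_eq_abs, abs_of_pos hspos, hsfac]
        field_simp
      have hwball : ∀ t : ℝ, t ∈ Set.Icc (0:ℝ) 1 → ‖(0:X) + t • w‖ < δ := by
        intro t ht
        rw [zero_add, norm_smul, Real.norm_eq_abs, abs_of_nonneg ht.1]
        calc t * ‖w‖ ≤ 1 * ‖w‖ := by
              apply mul_le_mul_of_nonneg_right ht.2 (norm_nonneg _)
          _ = δ / 2 := by rw [one_mul, hwnorm]
          _ < δ := by linarith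
      have hwmem : ∀ t : ℝ, t ∈ Set.Icc (0:ℝ) 1 → ((0:X) + t • w) ∈ s := by
        intro t ht
        exact hmem _ (lt_of_lt_of_le (hwball t ht) hδr)
      have hBbd : ∀ t : ℝ, t ∈ Set.Icc (0:ℝ) 1 →
          B ((0:X) + t • w) w w ≤ B 0 w w + η * ‖w‖ ^ 2 := by
        intro t ht
        have hop : ‖B ((0:X) + t • w) - B 0‖ < η :=
          hδ₀ _ (lt_of_lt_of_le (hwball t ht) (min_le_left _ _))
        have : |(B ((0:X) + t • w) - B 0) w w| ≤ η * ‖w‖ ^ 2 := by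
          have h1 : ‖(B ((0:X) + t • w) - B 0) w w‖ ≤
              ‖B ((0:X) + t • w) - B 0‖ * ‖w‖ * ‖w‖ :=
            le_trans (((B ((0:X) + t • w) - B 0) w).le_opNorm w)
              (by
                apply mul_le_mul_of_nonneg_right _ (norm_nonneg _)
                exact (B ((0:X) + t • w) - B 0).le_opNorm w)
          rw [Real.norm_eq_abs] at h1
          calc |(B ((0:X) + t • w) - B 0) w w| ≤ ‖B ((0:X) + t • w) - B 0‖ * ‖w‖ * ‖w‖ := h1
            _ ≤ η * ‖w‖ * ‖w‖ := by
                apply mul_le_mul_of_nonneg_right _ (norm_nonneg _)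
                exact mul_le_mul_of_nonneg_right hop.le (norm_nonneg _)
            _ = η * ‖w‖ ^ 2 := by ring
        simp only [ContinuousLinearMap.sub_apply] at this
        have := abs_le.1 this
        linarith [this.2]
      have hupper := seg_high e f B 0 w (B 0 w w + η * ‖w‖ ^ 2)
        (fun t ht => hf _ (hwmem t ht)) (fun t ht => hB _ (hwmem t ht)) hBbd
      rw [he0, hf0] at hupper
      simp only [ContinuousLinearMap.zero_apply, zero_add, add_zero] at hupper
      have hlower : γ / 2 * ‖w‖ ^ 2 ≤ e w := by
        apply hge
        apply hmem
        rw [hwnorm]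
        linarith
      have hww : γ * ‖w‖ ^ 2 ≤ B 0 w w + η * ‖w‖ ^ 2 := by linarith
      -- scale back
      have hBww : B 0 w w = sfac ^ 2 * (B 0 v v) := by
        rw [hw]
        simp [ContinuousLinearMap.map_smul, smul_eq_mul]
        ring
      have hwsq : ‖w‖ ^ 2 = sfac ^ 2 * ‖v‖ ^ 2 := by
        rw [hw, norm_smul, Real.norm_eq_abs, abs_of_pos hspos]
        ring
      rw [hBww, hwsq] at hww
      have hs2 : 0 < sfac ^ 2 := by positivity
      nlinarith [hww]
    by_contra hcon
    push_neg at hcon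
    have hη : 0 < (γ * ‖v‖ ^ 2 - B 0 v v) / (2 * ‖v‖ ^ 2) := by
      apply div_pos (by linarith) (by positivity)
    have := key _ hη
    have h2 : (γ * ‖v‖ ^ 2 - B 0 v v) / (2 * ‖v‖ ^ 2) * ‖v‖ ^ 2
        = (γ * ‖v‖ ^ 2 - B 0 v v) / 2 := by
      field_simp
    rw [h2] at this
    linarith
  -- MAIN PART
  intro ε hε
  have hη : (0:ℝ) < ε / 2 := by linarith
  have hnB : ContinuousOn (fun x => ‖B x - B 0‖) s := by
    have h2 : ContinuousOn (fun x => B x - B 0) s := (hf2.continuousOn_fderiv_of_isOpen hsOpen (by norm_num)).sub (continuousOn_const (c := fderiv ℝ f 0))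
    exact ContinuousOn.norm (E := X →L[ℝ] X →L[ℝ] ℝ) h2
  obtain ⟨δ₀, hδ₀pos, hδ₀'⟩ := Metric.continuousAt_iff.1
    (hnB.continuousAt (hsOpen.mem_nhds h0s)) (ε / 2) hη
  have hδ₀ : ∀ x : X, ‖x‖ < δ₀ → ‖B x - B 0‖ < ε / 2 := by
    intro x hx
    have h3 := hδ₀' (show dist x (0:X) < δ₀ by rwa [dist_zero_right])
    rw [Real.dist_eq] at h3
    rw [show ‖B 0 - B 0‖ = 0 from le_antisymm (ContinuousLinearMap.opNorm_le_bound _ le_rfl (fun y => by simp)) (ContinuousLinearMap.opNorm_nonneg _), sub_zero] at h3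
    exact lt_of_le_of_lt (le_abs_self _) h3
  set δ := min δ₀ r with hδdef
  have hδpos : 0 < δ := lt_min hδ₀pos hr
  have hδr : δ ≤ r := min_le_right _ _
  have hBlow : ∀ x : X, ‖x‖ < δ → ∀ v : X, (γ - ε / 2) * ‖v‖ ^ 2 ≤ B x v v := by
    intro x hx v
    have h1 := hB0 v
    have hop : ‖B x - B 0‖ < ε / 2 := hδ₀ x (lt_of_lt_of_le hx (min_le_left _ _))
    have h2 : |(B x - B 0) v v| ≤ ε / 2 * ‖v‖ ^ 2 := by
      have ha : ‖(B x - B 0) v v‖ ≤ ‖B x - B 0‖ * ‖v‖ * ‖v‖ :=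
        le_trans (((B x - B 0) v).le_opNorm v)
          (mul_le_mul_of_nonneg_right ((B x - B 0).le_opNorm v) (norm_nonneg _))
      rw [Real.norm_eq_abs] at ha
      calc |(B x - B 0) v v| ≤ ‖B x - B 0‖ * ‖v‖ * ‖v‖ := ha
        _ ≤ ε / 2 * ‖v‖ * ‖v‖ := by
            apply mul_le_mul_of_nonneg_right _ (norm_nonneg _)
            exact mul_le_mul_of_nonneg_right hop.le (norm_nonneg _)
        _ = ε / 2 * ‖v‖ ^ 2 := by ring
    simp only [ContinuousLinearMap.sub_apply] at h2
    have h3 := (abs_le.1 h2).1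
    linarith
  set ρ := δ / 3 with hρdef
  have hρpos : 0 < ρ := by positivity
  set κ := min (ε / 8 * ρ) (ε / 4 * ρ ^ 2) with hκdef
  have hκpos : 0 < κ := lt_min (by positivity) (by positivity)
  obtain ⟨R₁, hR₁pos, hR₁'⟩ := Metric.continuousAt_iff.1
    (he.continuousOn.continuousAt (hsOpen.mem_nhds h0s)) κ hκpos
  have hR₁ : ∀ u : X, ‖u‖ < R₁ → |e u| ≤ κ := by
    intro u hu
    have h3 := hR₁' (show dist u (0:X) < R₁ by rwa [dist_zero_right])
    rw [Real.dist_eq, he0, sub_zero] at h3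
    exact h3.le
  have hnf : ContinuousOn (fun x => ‖f x‖) s :=
    ContinuousOn.norm (E := X →L[ℝ] ℝ) (hf2.continuousOn)
  obtain ⟨R₂, hR₂pos, hR₂'⟩ := Metric.continuousAt_iff.1
    (hnf.continuousAt (hsOpen.mem_nhds h0s)) κ hκpos
  have hR₂ : ∀ u : X, ‖u‖ < R₂ → ‖f u‖ ≤ κ := by
    intro u hu
    have h3 := hR₂' (show dist u (0:X) < R₂ by rwa [dist_zero_right])
    rw [Real.dist_eq, hf0] at h3
    simp only [ContinuousLinearMap.opNorm_zero, sub_zero] at h3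
    exact (lt_of_le_of_lt (le_abs_self _) h3).le
  refine ⟨min (min (R₁ / 2) (R₂ / 2)) (min ρ (ε * ρ / (8 * (γ + 1)))), ?_, ?_⟩
  · apply lt_min (lt_min (by linarith) (by linarith))
    apply lt_min hρpos
    positivity
  set R := min (min (R₁ / 2) (R₂ / 2)) (min ρ (ε * ρ / (8 * (γ + 1)))) with hRdef
  intro u hu v
  have huR₁ : ‖u‖ < R₁ := by
    have : R ≤ R₁ / 2 := le_trans (min_le_left _ _) (min_le_left _ _)
    linarith
  have huR₂ : ‖u‖ < R₂ := by
    have : R ≤ R₂ / 2 := le_trans (min_le_left _ _) (min_le_right _ _)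
    linarith
  have hRρ : R ≤ ρ := le_trans (min_le_right _ _) (min_le_left _ _)
  have hRγ : R ≤ ε * ρ / (8 * (γ + 1)) := le_trans (min_le_right _ _) (min_le_right _ _)
  have heu : |e u| ≤ κ := hR₁ u huR₁
  have hfu : ‖f u‖ ≤ κ := hR₂ u huR₂
  have huδ : ‖u‖ < δ := by
    have : ρ < δ := by rw [hρdef]; linarith
    linarith [le_trans hu hRρ]
  have hus : u ∈ s := hmem u (lt_of_lt_of_le huδ hδr)
  have hEu : E u = (e u : EReal) := hEe u hus
  have hκ1 : κ ≤ ε / 8 * ρ := min_le_left _ _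
  have hκ2 : κ ≤ ε / 4 * ρ ^ 2 := min_le_right _ _
  have hγR : γ * R ≤ ε * ρ / 8 := by
    have h1 : (γ + 1) * R ≤ (γ + 1) * (ε * ρ / (8 * (γ + 1))) :=
      mul_le_mul_of_nonneg_left hRγ (by linarith)
    have h2 : (γ + 1) * (ε * ρ / (8 * (γ + 1))) = ε * ρ / 8 := by
      field_simp
    rw [h2] at h1
    have hR0 : (0:ℝ) ≤ R := le_trans (norm_nonneg u) hu
    linarith
  rcases le_or_gt ‖v‖ ρ with hv | hv
  · -- Case A : small v, use second-order Taylor on the segment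
    have hsegδ : ∀ t : ℝ, t ∈ Set.Icc (0:ℝ) 1 → ‖u + t • v‖ < δ := by
      intro t ht
      calc ‖u + t • v‖ ≤ ‖u‖ + ‖t • v‖ := norm_add_le _ _
        _ = ‖u‖ + t * ‖v‖ := by
            rw [norm_smul, Real.norm_eq_abs, abs_of_nonneg ht.1]
        _ ≤ ρ + 1 * ρ := by
            have h1 : ‖u‖ ≤ ρ := le_trans hu hRρ
            have h2 : t * ‖v‖ ≤ 1 * ρ := by
              apply mul_le_mul ht.2 hv (norm_nonneg _) zero_le_one
            linarith
        _ < δ := by rw [hρdef]; linarith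
    have hsegmem : ∀ t : ℝ, t ∈ Set.Icc (0:ℝ) 1 → (u + t • v) ∈ s := by
      intro t ht
      exact hmem _ (lt_of_lt_of_le (hsegδ t ht) hδr)
    have hc : ∀ t ∈ Set.Icc (0:ℝ) 1, (γ - ε / 2) * ‖v‖ ^ 2 ≤ B (u + t • v) v v :=
      fun t ht => hBlow _ (hsegδ t ht) v
    have hlow := seg_low e f B u v ((γ - ε / 2) * ‖v‖ ^ 2)
      (fun t ht => hf _ (hsegmem t ht)) (fun t ht => hB _ (hsegmem t ht)) hc
    have huvs : u + v ∈ s := by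
      have := hsegmem 1 (Set.right_mem_Icc.2 zero_le_one)
      simpa using this
    rw [hEe _ huvs, hEu, ← EReal.coe_sub, ← EReal.coe_sub, EReal.coe_le_coe_iff]
    have h4 : (0:ℝ) ≤ ε * ‖v‖ ^ 2 := by positivity
    linarith [hlow, h4]
  · -- Case B : large v, use the growth hypothesis directly
    have hfuv : f u v ≤ κ * ‖v‖ := by
      have h1 : ‖f u v‖ ≤ ‖f u‖ * ‖v‖ := (f u).le_opNorm v
      rw [Real.norm_eq_abs] at h1
      have h2 : ‖f u‖ * ‖v‖ ≤ κ * ‖v‖ := mul_le_mul_of_nonneg_right hfu (norm_nonneg _)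
      linarith [le_abs_self (f u v)]
    have hnv : ‖v‖ - ‖u‖ ≤ ‖u + v‖ := by
      have h := norm_sub_norm_le v (-u)
      rw [sub_neg_eq_add, norm_neg, add_comm v u] at h
      linarith
    have hvu : 0 ≤ ‖v‖ - ‖u‖ := by
      have : ‖u‖ ≤ ρ := le_trans hu hRρ
      linarith
    have hsq : (‖v‖ - ‖u‖) ^ 2 ≤ ‖u + v‖ ^ 2 := pow_le_pow_left₀ hvu hnv 2
    have hreal : (γ - ε) / 2 * ‖v‖ ^ 2 ≤ γ / 2 * ‖u + v‖ ^ 2 - e u - f u v := by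
      have hγuv : γ * ‖u‖ * ‖v‖ ≤ ε * ρ / 8 * ‖v‖ := by
        apply mul_le_mul_of_nonneg_right _ (norm_nonneg _)
        calc γ * ‖u‖ ≤ γ * R := mul_le_mul_of_nonneg_left hu hγ
          _ ≤ ε * ρ / 8 := hγR
      have hκv : κ * ‖v‖ ≤ ε / 8 * ρ * ‖v‖ :=
        mul_le_mul_of_nonneg_right hκ1 (norm_nonneg _)
      have hρv2 : ρ * ‖v‖ ≤ ‖v‖ ^ 2 := by
        have h5 := mul_le_mul_of_nonneg_right hv.le (norm_nonneg v)
        rw [sq]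
        linarith
      have hρ2v2 : ρ ^ 2 ≤ ‖v‖ ^ 2 := pow_le_pow_left₀ hρpos.le hv.le 2
      have hg2 : γ / 2 * (‖v‖ - ‖u‖) ^ 2 ≤ γ / 2 * ‖u + v‖ ^ 2 :=
        mul_le_mul_of_nonneg_left hsq (by linarith)
      have hA : e u ≤ ε / 4 * ‖v‖ ^ 2 := by
        have h6 := (abs_le.1 heu).2
        have h5 : ε * ρ ^ 2 ≤ ε * ‖v‖ ^ 2 := mul_le_mul_of_nonneg_left hρ2v2 hε.le
        linarith
      have hBv : f u v ≤ ε / 8 * ‖v‖ ^ 2 := by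
        have h5 : ε * (ρ * ‖v‖) ≤ ε * ‖v‖ ^ 2 := mul_le_mul_of_nonneg_left hρv2 hε.le
        linarith [hfuv, hκv]
      have hC : γ * ‖u‖ * ‖v‖ ≤ ε / 8 * ‖v‖ ^ 2 := by
        have h5 : ε * (ρ * ‖v‖) ≤ ε * ‖v‖ ^ 2 := mul_le_mul_of_nonneg_left hρv2 hε.le
        linarith [hγuv]
      have hD : (0:ℝ) ≤ γ * ‖u‖ ^ 2 := by positivity
      linarith [hg2, hA, hBv, hC, hD]
    calc (((γ - ε) / 2 * ‖v‖ ^ 2 : ℝ) : EReal)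
        ≤ ((γ / 2 * ‖u + v‖ ^ 2 - e u - f u v : ℝ) : EReal) :=
          EReal.coe_le_coe_iff.2 hreal
      _ = ((γ / 2 * ‖u + v‖ ^ 2 : ℝ) : EReal) - ((e u : ℝ) : EReal)
            - ((f u v : ℝ) : EReal) := by
          rw [← EReal.coe_sub, ← EReal.coe_sub]
      _ ≤ E (u + v) - E u - ((f u v : ℝ) : EReal) := by
          rw [hEu]
          exact EReal.sub_le_sub (EReal.sub_le_sub (hgrowth (u + v)) le_rfl) le_rfl
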